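/- A finite tree admits at most one edge that is inverted by some automorphism: if φ and φ' are automorphisms of a finite tree T inverting edges {v₀, v₁} and {v₀', v₁'} respectively, then {v₀, v₁} = {v₀', v₁'}. -/

import Mathlib

open SimpleGraph

section Aux

variable {V : Type*} {G : SimpleGraph V}

private lemma isPath_concat_aux {x u v : V} {p : G.Walk x u} (hp : p.IsPath) (h : G.Adj u v)
    (hv : v ∉ p.support) : (p.concat h).IsPath := by
  have h1 : ((p.concat h).reverse).IsPath := by
    rw [SimpleGraph.Walk.reverse_concat]
    exact SimpleGraph.Walk.IsPath.cons hp.reverse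
      (by simpa [SimpleGraph.Walk.support_reverse] using hv)
  have h2 := h1.reverse
  rwa [SimpleGraph.Walk.reverse_reverse] at h2

private lemma mem_support_dist_le {x y z : V} (p : G.Walk x y) (hz : z ∈ p.support) :
    G.dist x z + G.dist z y ≤ p.length := by
  classical
  have h1 := SimpleGraph.dist_le (p.takeUntil z hz)
  have h2 := SimpleGraph.dist_le (p.dropUntil z hz)
  have h3 := congrArg SimpleGraph.Walk.length (p.take_spec hz)
  rw [SimpleGraph.Walk.length_append] at h3
  omega

/-- In a tree, the distances from a point to the two endpoints of an edge differ. -/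
private lemma adj_dist_ne (hT : G.IsTree) {u v : V} (huv : G.Adj u v) (x : V) :
    G.dist x u ≠ G.dist x v := by
  intro heq
  have conn := hT.isConnected
  obtain ⟨p, hp, hpl⟩ := conn.exists_path_of_dist x u
  have hdvu : G.dist v u = 1 := SimpleGraph.dist_eq_one_iff_adj.2 huv.symm
  have hvns : v ∉ p.support := by
    intro hvmem
    have := mem_support_dist_le p hvmem
    omega
  have hq : (p.concat huv).IsPath := isPath_concat_aux hp huv hvns
  obtain ⟨q, hq', hql⟩ := conn.exists_path_of_dist x v
  have heqp : (p.concat huv) = q := (hT.existsUnique_path x v).unique hq hq'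
  have hlen : (p.concat huv).length = q.length := by rw [heqp]
  rw [SimpleGraph.Walk.length_concat, hpl, hql] at hlen
  omega

/-- Trichotomy: a point is strictly closer to one endpoint of an edge. -/
private lemma adj_dist_cases (hT : G.IsTree) {u v : V} (huv : G.Adj u v) (x : V) :
    G.dist x u = G.dist x v + 1 ∨ G.dist x v = G.dist x u + 1 := by
  have conn := hT.isConnected
  have h1 : G.dist x u ≤ G.dist x v + G.dist v u := conn.dist_triangle
  have h2 : G.dist x v ≤ G.dist x u + G.dist u v := conn.dist_triangle
  have hdvu : G.dist v u = 1 := SimpleGraph.dist_eq_one_iff_adj.2 huv.symm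
  have hduv : G.dist u v = 1 := SimpleGraph.dist_eq_one_iff_adj.2 huv
  have hne := adj_dist_ne hT huv x
  omega

/-- Boundary lemma: the only edge crossing the two sides of an edge in a tree
is that edge itself. -/
private lemma boundary (hT : G.IsTree) {v₀ v₁ : V} (h : G.Adj v₀ v₁) {u w : V}
    (huw : G.Adj u w) (hu : G.dist u v₀ = G.dist u v₁ + 1)
    (hw : G.dist w v₁ = G.dist w v₀ + 1) : u = v₁ ∧ w = v₀ := by
  have conn := hT.isConnected
  have hduw : G.dist u w = 1 := SimpleGraph.dist_eq_one_iff_adj.2 huw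
  have hdwu : G.dist w u = 1 := SimpleGraph.dist_eq_one_iff_adj.2 huw.symm
  have t1 : G.dist u v₀ ≤ G.dist u w + G.dist w v₀ := conn.dist_triangle
  have t2 : G.dist w v₁ ≤ G.dist w u + G.dist u v₁ := conn.dist_triangle
  have hm : G.dist u v₁ = G.dist w v₀ := by omega
  by_cases hm0 : G.dist u v₁ = 0
  · have hu1 : u = v₁ := conn.dist_eq_zero_iff.mp hm0
    have hw0 : w = v₀ := conn.dist_eq_zero_iff.mp (by omega)
    exact ⟨hu1, hw0⟩
  · exfalso
    obtain ⟨p, hp, hpl⟩ := conn.exists_path_of_dist v₁ u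
    have hplen : p.length = G.dist u v₁ := by rw [hpl, SimpleGraph.dist_comm]
    have hv₀ : v₀ ∉ p.support := by
      intro hmem
      have := mem_support_dist_le p hmem
      have : G.dist v₀ u = G.dist u v₀ := SimpleGraph.dist_comm
      omega
    have hwns : w ∉ p.support := by
      intro hmem
      have := mem_support_dist_le p hmem
      have : G.dist v₁ w = G.dist w v₁ := SimpleGraph.dist_comm
      omega
    have hwv0 : w ≠ v₀ := by
      intro e
      rw [e] at hm
      have : G.dist v₀ v₀ = 0 := by simp
      omega
    have hcons : (SimpleGraph.Walk.cons h p).IsPath := hp.cons hv₀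
    have hwns' : w ∉ (SimpleGraph.Walk.cons h p).support := by
      simp only [SimpleGraph.Walk.support_cons, List.mem_cons]
      push_neg
      exact ⟨hwv0, hwns⟩
    have hcat : ((SimpleGraph.Walk.cons h p).concat huw).IsPath :=
      isPath_concat_aux hcons huw hwns'
    obtain ⟨q, hq, hql⟩ := conn.exists_path_of_dist v₀ w
    have heqp : ((SimpleGraph.Walk.cons h p).concat huw) = q :=
      (hT.existsUnique_path v₀ w).unique hcat hq
    have hlen : ((SimpleGraph.Walk.cons h p).concat huw).length = q.length := by rw [heqp]
    rw [SimpleGraph.Walk.length_concat, SimpleGraph.Walk.length_cons, hplen, hql] at hlen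
    have : G.dist v₀ w = G.dist w v₀ := SimpleGraph.dist_comm
    omega

/-- Crossing lemma: the distance between points on opposite sides of an edge of a tree
splits at that edge. -/
private lemma crossing (hT : G.IsTree) {v₀ v₁ : V} (h : G.Adj v₀ v₁) :
    ∀ (n : ℕ) (x y : V), G.dist x y = n → G.dist x v₀ = G.dist x v₁ + 1 →
      G.dist y v₁ = G.dist y v₀ + 1 → G.dist x y = G.dist x v₁ + 1 + G.dist v₀ y := by
  have conn := hT.isConnected
  intro n
  induction n with
  | zero =>
    intro x y hxy hx hy
    have hxy' : x = y := conn.dist_eq_zero_iff.mp hxy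
    subst hxy'
    omega
  | succ n ih =>
    intro x y hxy hx hy
    obtain ⟨p, hpl⟩ := conn.exists_walk_length_eq_dist x y
    rw [hxy] at hpl
    cases p with
    | nil => simp at hpl
    | @cons _ z _ ha q =>
      have hql : q.length = n := by
        simp only [SimpleGraph.Walk.length_cons] at hpl
        omega
      have hzy_le : G.dist z y ≤ n := by
        have := SimpleGraph.dist_le q
        omega
      have hxz : G.dist x z = 1 := SimpleGraph.dist_eq_one_iff_adj.2 ha
      have hzx : G.dist z x = 1 := SimpleGraph.dist_eq_one_iff_adj.2 ha.symm
      have htri : G.dist x y ≤ G.dist x z + G.dist z y := conn.dist_triangle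
      have hzy : G.dist z y = n := by omega
      have hd01 : G.dist v₀ v₁ = 1 := SimpleGraph.dist_eq_one_iff_adj.2 h
      have hd10 : G.dist v₁ v₀ = 1 := SimpleGraph.dist_eq_one_iff_adj.2 h.symm
      rcases adj_dist_cases hT h z with hzB | hzA
      · -- z is on the v₁-side as well: use the induction hypothesis
        have hrec := ih z y hzy hzB hy
        have hupper : G.dist x v₁ ≤ G.dist z v₁ + 1 := by
          have := conn.dist_triangle (u := x) (v := z) (w := v₁)
          omega
        have hlower : G.dist z v₁ + 1 ≤ G.dist x v₁ := by
          by_contra hcon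
          push_neg at hcon
          have t1 : G.dist x y ≤ G.dist x v₁ + G.dist v₁ y := conn.dist_triangle
          have t2 : G.dist v₁ y ≤ G.dist v₁ v₀ + G.dist v₀ y := conn.dist_triangle
          omega
        omega
      · -- z is on the v₀-side: the edge (x, z) crosses, so x = v₁ and z = v₀
        obtain ⟨hxv, hzv⟩ := boundary hT h ha hx hzA
        have e1 : G.dist x v₁ = 0 := by rw [hxv]; simp
        have e2 : G.dist x y = G.dist y v₁ := by rw [hxv, SimpleGraph.dist_comm]
        have e3 : G.dist v₀ y = G.dist y v₀ := SimpleGraph.dist_comm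
        omega

private lemma iso_dist (conn : G.Connected) (ψ : G ≃g G) (x y : V) :
    G.dist (ψ x) (ψ y) = G.dist x y := by
  have half : ∀ (χ : G ≃g G) (a b : V), G.dist (χ a) (χ b) ≤ G.dist a b := by
    intro χ a b
    obtain ⟨p, hpl⟩ := conn.exists_walk_length_eq_dist a b
    calc G.dist (χ a) (χ b) ≤ (p.map χ.toHom).length := SimpleGraph.dist_le _
      _ = G.dist a b := by rw [SimpleGraph.Walk.length_map, hpl]
  refine le_antisymm (half ψ x y) ?_
  have := half ψ.symm (ψ x) (ψ y)
  simpa using this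

/-- Main counting lemma, under a canonical labelling of the two edges. -/
private lemma main_lemma {V : Type*} [Fintype V] {G : SimpleGraph V} (hT : G.IsTree)
    (φ φ' : G ≃g G) (v₀ v₁ v₀' v₁' : V)
    (h : G.Adj v₀ v₁) (hφ₀ : φ v₀ = v₁) (hφ₁ : φ v₁ = v₀)
    (h' : G.Adj v₀' v₁') (hφ₀' : φ' v₀' = v₁') (hφ₁' : φ' v₁' = v₀')
    (ha : G.dist v₀' v₁ = G.dist v₀' v₀ + 1) (hb : G.dist v₁' v₁ = G.dist v₁' v₀ + 1)
    (hc : G.dist v₀ v₁' = G.dist v₀ v₀' + 1) (hd : G.dist v₁ v₁' = G.dist v₁ v₀' + 1) :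
    False := by
  classical
  have conn := hT.isConnected
  set Af : Finset V := Finset.univ.filter (fun x => G.dist x v₁ = G.dist x v₀ + 1) with hAf
  set Bf : Finset V := Finset.univ.filter (fun x => G.dist x v₀ = G.dist x v₁ + 1) with hBf
  set Af' : Finset V := Finset.univ.filter (fun x => G.dist x v₁' = G.dist x v₀' + 1) with hAf'
  set Bf' : Finset V := Finset.univ.filter (fun x => G.dist x v₀' = G.dist x v₁' + 1) with hBf'
  -- |A| = |B| via φ
  have cardAB : Af.card = Bf.card := by
    apply Finset.card_bij' (fun x _ => φ x) (fun y _ => φ.symm y)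
    · intro x hx
      simp only [hAf, Finset.mem_filter, Finset.mem_univ, true_and] at hx
      simp only [hBf, Finset.mem_filter, Finset.mem_univ, true_and]
      have e0 : G.dist (φ x) v₀ = G.dist x v₁ := by
        conv_lhs => rw [← hφ₁]
        exact iso_dist conn φ x v₁
      have e1 : G.dist (φ x) v₁ = G.dist x v₀ := by
        conv_lhs => rw [← hφ₀]
        exact iso_dist conn φ x v₀
      omega
    · intro y hy
      simp only [hBf, Finset.mem_filter, Finset.mem_univ, true_and] at hy
      simp only [hAf, Finset.mem_filter, Finset.mem_univ, true_and]
      have s0 : φ.symm v₀ = v₁ := by rw [← hφ₁]; simp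
      have s1 : φ.symm v₁ = v₀ := by rw [← hφ₀]; simp
      have e0 : G.dist (φ.symm y) v₁ = G.dist y v₀ := by
        conv_lhs => rw [← s0]
        exact iso_dist conn φ.symm y v₀
      have e1 : G.dist (φ.symm y) v₀ = G.dist y v₁ := by
        conv_lhs => rw [← s1]
        exact iso_dist conn φ.symm y v₁
      omega
    · intro x _; simp
    · intro y _; simp
  -- |A'| = |B'| via φ'
  have cardAB' : Af'.card = Bf'.card := by
    apply Finset.card_bij' (fun x _ => φ' x) (fun y _ => φ'.symm y)
    · intro x hx
      simp only [hAf', Finset.mem_filter, Finset.mem_univ, true_and] at hx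
      simp only [hBf', Finset.mem_filter, Finset.mem_univ, true_and]
      have e0 : G.dist (φ' x) v₀' = G.dist x v₁' := by
        conv_lhs => rw [← hφ₁']
        exact iso_dist conn φ' x v₁'
      have e1 : G.dist (φ' x) v₁' = G.dist x v₀' := by
        conv_lhs => rw [← hφ₀']
        exact iso_dist conn φ' x v₀'
      omega
    · intro y hy
      simp only [hBf', Finset.mem_filter, Finset.mem_univ, true_and] at hy
      simp only [hAf', Finset.mem_filter, Finset.mem_univ, true_and]
      have s0 : φ'.symm v₀' = v₁' := by rw [← hφ₁']; simp
      have s1 : φ'.symm v₁' = v₀' := by rw [← hφ₀']; simp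
      have e0 : G.dist (φ'.symm y) v₁' = G.dist y v₀' := by
        conv_lhs => rw [← s0]
        exact iso_dist conn φ'.symm y v₀'
      have e1 : G.dist (φ'.symm y) v₀' = G.dist y v₁' := by
        conv_lhs => rw [← s1]
        exact iso_dist conn φ'.symm y v₁'
      omega
    · intro x _; simp
    · intro y _; simp
  -- B ⊆ A'
  have hBA' : Bf ⊆ Af' := by
    intro x hx
    simp only [hBf, Finset.mem_filter, Finset.mem_univ, true_and] at hx
    simp only [hAf', Finset.mem_filter, Finset.mem_univ, true_and]
    have c0 := crossing hT h (G.dist x v₀') x v₀' rfl hx ha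
    have c1 := crossing hT h (G.dist x v₁') x v₁' rfl hx hb
    have e0 : G.dist v₀ v₀' = G.dist v₀' v₀ := SimpleGraph.dist_comm
    have e1 : G.dist v₀ v₁' = G.dist v₁' v₀ := SimpleGraph.dist_comm
    omega
  -- B' ⊆ A
  have hB'A : Bf' ⊆ Af := by
    intro x hx
    simp only [hBf', Finset.mem_filter, Finset.mem_univ, true_and] at hx
    simp only [hAf, Finset.mem_filter, Finset.mem_univ, true_and]
    have c0 := crossing hT h' (G.dist x v₀) x v₀ rfl hx hc
    have c1 := crossing hT h' (G.dist x v₁) x v₁ rfl hx hd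
    have e0 : G.dist v₀' v₀ = G.dist v₀ v₀' := SimpleGraph.dist_comm
    have e1 : G.dist v₀' v₁ = G.dist v₁ v₀' := SimpleGraph.dist_comm
    omega
  -- v₀ ∈ A' \ B
  have hd00 : G.dist v₀ v₀ = 0 := by simp
  have hd01 : G.dist v₀ v₁ = 1 := SimpleGraph.dist_eq_one_iff_adj.2 h
  have hv₀A' : v₀ ∈ Af' := by
    simp only [hAf', Finset.mem_filter, Finset.mem_univ, true_and]
    exact hc
  have hv₀B : v₀ ∉ Bf := by
    simp only [hBf, Finset.mem_filter, Finset.mem_univ, true_and]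
    omega
  have hss : Bf ⊂ Af' := ⟨hBA', fun hcontra => hv₀B (hcontra hv₀A')⟩
  have h1 : Bf.card < Af'.card := Finset.card_lt_card hss
  have h2 : Bf'.card ≤ Af.card := Finset.card_le_card hB'A
  omega

end Aux

/-- A finite tree admits at most one edge inverted by some automorphism. -/
theorem tree_inverted_edge_unique
    {V : Type*} [Fintype V] (G : SimpleGraph V) (hT : G.IsTree)
    (φ φ' : G ≃g G) (v₀ v₁ v₀' v₁' : V)
    (h : G.Adj v₀ v₁) (hφ₀ : φ v₀ = v₁) (hφ₁ : φ v₁ = v₀)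
    (h' : G.Adj v₀' v₁') (hφ₀' : φ' v₀' = v₁') (hφ₁' : φ' v₁' = v₀') :
    s(v₀, v₁) = s(v₀', v₁') := by
  by_contra hne
  -- the endpoints of e' lie on the same side of e, and vice versa
  rcases adj_dist_cases hT h v₀' with h0B | h0A <;>
    rcases adj_dist_cases hT h v₁' with h1B | h1A
  · -- v₀', v₁' both on v₁-side of e (i.e. in B)
    rcases adj_dist_cases hT h' v₀ with g0B | g0A <;>
      rcases adj_dist_cases hT h' v₁ with g1B | g1A
    · exact main_lemma hT φ φ' v₁ v₀ v₁' v₀' h.symm hφ₁ hφ₀ h'.symm hφ₁' hφ₀' h1B h0B g1B g0B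
    · -- v₀ in B', v₁ in A' : crossing edge
      obtain ⟨e1, e2⟩ := boundary hT h' h g0B g1A
      exact hne (by rw [e1, e2, Sym2.eq_swap])
    · obtain ⟨e1, e2⟩ := boundary hT h' h.symm g1B g0A
      exact hne (by rw [e1, e2])
    · exact main_lemma hT φ φ' v₁ v₀ v₀' v₁' h.symm hφ₁ hφ₀ h' hφ₀' hφ₁' h0B h1B g1A g0A
  · obtain ⟨e1, e2⟩ := boundary hT h h' h0B h1A
    exact hne (by rw [← e2, ← e1, Sym2.eq_swap])
  · obtain ⟨e1, e2⟩ := boundary hT h h'.symm h1B h0A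
    exact hne (by rw [← e1, ← e2])
  · -- v₀', v₁' both in A
    rcases adj_dist_cases hT h' v₀ with g0B | g0A <;>
      rcases adj_dist_cases hT h' v₁ with g1B | g1A
    · exact main_lemma hT φ φ' v₀ v₁ v₁' v₀' h hφ₀ hφ₁ h'.symm hφ₁' hφ₀' h1A h0A g0B g1B
    · obtain ⟨e1, e2⟩ := boundary hT h' h g0B g1A
      exact hne (by rw [e1, e2, Sym2.eq_swap])
    · obtain ⟨e1, e2⟩ := boundary hT h' h.symm g1B g0A
      exact hne (by rw [e1, e2])
    · exact main_lemma hT φ φ' v₀ v₁ v₀' v₁' h hφ₀ hφ₁ h' hφ₀' hφ₁' h0A h1A g0A g1A
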